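/- Polynomial Poincaré lemma for the gradient: if v ∈ 𝐏_r is a vector field on ℝ³ with polynomial components of total degree at most r and ∇×v = 0 everywhere on ℝ³, then there exists a polynomial p ∈ P_{r+1} such that v = ∇p. -/

import Mathlib

open MeasureTheory

/-- Divergence of a vector field on ℝ³. -/
noncomputable def pdiv (v : (Fin 3 → ℝ) → (Fin 3 → ℝ)) (x : Fin 3 → ℝ) : ℝ :=
  ∑ i : Fin 3, fderiv ℝ (fun y => v y i) x (Pi.single i 1)

/-- Curl of a vector field on ℝ³. -/
noncomputable def pcurl (v : (Fin 3 → ℝ) → (Fin 3 → ℝ)) (x : Fin 3 → ℝ) : Fin 3 → ℝ :=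
  ![fderiv ℝ (fun y => v y 2) x (Pi.single 1 1) - fderiv ℝ (fun y => v y 1) x (Pi.single 2 1),
    fderiv ℝ (fun y => v y 0) x (Pi.single 2 1) - fderiv ℝ (fun y => v y 2) x (Pi.single 0 1),
    fderiv ℝ (fun y => v y 1) x (Pi.single 0 1) - fderiv ℝ (fun y => v y 0) x (Pi.single 1 1)]

/-- Gradient of a scalar field on ℝ³. -/
noncomputable def pgrad (p : (Fin 3 → ℝ) → ℝ) (x : Fin 3 → ℝ) : Fin 3 → ℝ :=
  fun i => fderiv ℝ p x (Pi.single i 1)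

/-- The Poincaré-type operator 𝔭: (𝔭u)(x) = (∫₀¹ t² u(tx) dt) x. -/
noncomputable def poin (u : (Fin 3 → ℝ) → ℝ) (x : Fin 3 → ℝ) : Fin 3 → ℝ :=
  (∫ t in (0:ℝ)..1, t ^ 2 * u (t • x)) • x

/-- `u` is a polynomial function of total degree at most `r` (P_r = {0} if r < 0). -/
def IsPolyDeg (r : ℤ) (u : (Fin 3 → ℝ) → ℝ) : Prop :=
  ∃ p : MvPolynomial (Fin 3) ℝ, (p = 0 ∨ (p.totalDegree : ℤ) ≤ r) ∧
    ∀ x, MvPolynomial.eval x p = u x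

/-- `v` is a vector field with polynomial components of total degree at most `r`. -/
def IsVecPolyDeg (r : ℤ) (v : (Fin 3 → ℝ) → (Fin 3 → ℝ)) : Prop :=
  ∀ i, IsPolyDeg r fun x => v x i

/-- `u` is a polynomial function. -/
def IsPolyFun (u : (Fin 3 → ℝ) → ℝ) : Prop :=
  ∃ p : MvPolynomial (Fin 3) ℝ, ∀ x, MvPolynomial.eval x p = u x

/-- Membership in S_k = {p ∈ (P̃_k)³ : x·p(x) = 0}. -/
def MemS (k : ℕ) (v : (Fin 3 → ℝ) → (Fin 3 → ℝ)) : Prop :=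
  (∀ i, ∃ p : MvPolynomial (Fin 3) ℝ, p.IsHomogeneous k ∧ ∀ x, MvPolynomial.eval x p = v x i) ∧
    ∀ x, ∑ i : Fin 3, x i * v x i = 0

/-- Membership in the first-family Nédélec space R_k = 𝐏_{k-1} ⊕ S_k. -/
def MemR (k : ℕ) (v : (Fin 3 → ℝ) → (Fin 3 → ℝ)) : Prop :=
  ∃ v₁ v₂, IsVecPolyDeg ((k : ℤ) - 1) v₁ ∧ MemS k v₂ ∧ v = v₁ + v₂


open MvPolynomial in
lemma my_degree_eq (s : Fin 3 →₀ ℕ) : s.degree = ∑ i : Fin 3, s i :=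
  Finset.sum_subset (Finset.subset_univ _)
    (fun i _ hi => by simpa using Finsupp.notMem_support_iff.1 hi)

open MvPolynomial in
lemma my_hasFDerivAt_eval (q : MvPolynomial (Fin 3) ℝ) (x : Fin 3 → ℝ) :
    HasFDerivAt (fun y : Fin 3 → ℝ => eval y q)
      (∑ i : Fin 3, eval x (pderiv i q) •
        (ContinuousLinearMap.proj i : (Fin 3 → ℝ) →L[ℝ] ℝ)) x := by
  induction q using MvPolynomial.induction_on with
  | C a => simpa using hasFDerivAt_const a x
  | add p q hp hq =>
    have h := hp.add hq
    convert h using 1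
    · rfl
    · rfl
    · rfl
    · rfl
    · rfl
    · funext y; simp
    · simp [add_smul, Finset.sum_add_distrib]
  | mul_X p n hp =>
    have hx : HasFDerivAt (⇑(ContinuousLinearMap.proj n : (Fin 3 → ℝ) →L[ℝ] ℝ))
        (ContinuousLinearMap.proj n : (Fin 3 → ℝ) →L[ℝ] ℝ) x :=
      ContinuousLinearMap.hasFDerivAt _
    have h := hp.mul hx
    convert h using 1
    · rfl
    · rfl
    · rfl
    · rfl
    · rfl
    · funext y; simp [ContinuousLinearMap.proj_apply]
    · apply ContinuousLinearMap.ext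
      intro w
      have hX : ∀ i : Fin 3, eval x (pderiv i (X n : MvPolynomial (Fin 3) ℝ)) =
          if n = i then 1 else 0 := fun i => by
        rcases eq_or_ne n i with h | h
        · subst h; simp
        · simp [pderiv_X_of_ne (Ne.symm h), h]
      simp only [ContinuousLinearMap.sum_apply, ContinuousLinearMap.smul_apply,
        ContinuousLinearMap.add_apply, ContinuousLinearMap.proj_apply,
        pderiv_mul, map_add, eval_mul, eval_X, hX, smul_eq_mul,
        add_mul, mul_ite, mul_one, mul_zero, ite_mul, zero_mul,
        Finset.sum_add_distrib, Finset.sum_ite_eq, Finset.mem_univ, if_true,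
        Finset.mul_sum]
      rw [add_comm]
      congr 1
      exact Finset.sum_congr rfl fun i _ => by ring

open MvPolynomial in
lemma my_fderiv_eval (q : MvPolynomial (Fin 3) ℝ) (x : Fin 3 → ℝ) (i : Fin 3) :
    fderiv ℝ (fun y => eval y q) x (Pi.single i 1) = eval x (pderiv i q) := by
  rw [(my_hasFDerivAt_eval q x).fderiv]
  simp [ContinuousLinearMap.sum_apply, Pi.single_apply]

open MvPolynomial in
lemma my_euler_monomial (s : Fin 3 →₀ ℕ) (c : ℝ) :
    ∑ i : Fin 3, X i * pderiv i (monomial s c) = (s.degree : ℝ) • monomial s c := by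
  have key : ∀ i : Fin 3, X i * pderiv i (monomial s c) = (s i : ℝ) • monomial s c := by
    intro i
    rcases Nat.eq_zero_or_pos (s i) with h | h
    · simp [h]
    · have hle : Finsupp.single i 1 ≤ s := Finsupp.single_le_iff.2 h
      rw [pderiv_monomial, X, monomial_mul, smul_monomial,
        add_comm, tsub_add_cancel_of_le hle, one_mul, smul_eq_mul, mul_comm]
  rw [Finset.sum_congr rfl fun i _ => key i, ← Finset.sum_smul, my_degree_eq]
  norm_cast

open MvPolynomial in
lemma my_euler (n : ℕ) (p : MvPolynomial (Fin 3) ℝ) (hp : p.IsHomogeneous n) :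
    ∑ i : Fin 3, X i * pderiv i p = (n : ℝ) • p := by
  conv_lhs => rw [← support_sum_monomial_coeff p]
  conv_rhs => rw [← support_sum_monomial_coeff p]
  rw [Finset.smul_sum]
  simp only [map_sum, Finset.mul_sum]
  rw [Finset.sum_comm]
  refine Finset.sum_congr rfl fun s hs => ?_
  rw [my_euler_monomial]
  congr 2
  rw [Finsupp.degree_eq_weight_one]
  exact hp (MvPolynomial.mem_support_iff.1 hs)

open MvPolynomial in
lemma my_homogeneousComponent_monomial (n : ℕ) (s : Fin 3 →₀ ℕ) (c : ℝ) :
    homogeneousComponent n (monomial s c) =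
      if n = s.degree then monomial s c else 0 := by
  exact homogeneousComponent_of_mem
    ((mem_homogeneousSubmodule _ _).2 (isHomogeneous_monomial c rfl))

open MvPolynomial in
lemma my_pderiv_homogeneousComponent (j : Fin 3) (d : ℕ) (q : MvPolynomial (Fin 3) ℝ) :
    pderiv j (homogeneousComponent (d + 1) q) =
      homogeneousComponent d (pderiv j q) := by
  induction q using MvPolynomial.induction_on' with
  | add p q hp hq => simp only [map_add, hp, hq]
  | monomial s c =>
    rcases Nat.eq_zero_or_pos (s j) with h | h
    · have hz : (pderiv j) ((monomial s) c) = 0 := by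
        rw [pderiv_monomial, h]; simp
      rw [my_homogeneousComponent_monomial, hz, map_zero]
      split
      · exact hz
      · exact map_zero _
    · have hle : Finsupp.single j 1 ≤ s := Finsupp.single_le_iff.2 h
      have hadd : (s - Finsupp.single j 1) + Finsupp.single j 1 = s :=
        tsub_add_cancel_of_le hle
      have hdeg : (s - Finsupp.single j 1).degree + 1 = s.degree := by
        conv_rhs => rw [← hadd]
        rw [my_degree_eq, my_degree_eq]
        simp only [Finsupp.add_apply, Finset.sum_add_distrib, Finsupp.single_apply,
          Finset.sum_ite_eq, Finset.mem_univ, if_true]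
      rw [my_homogeneousComponent_monomial, pderiv_monomial,
        my_homogeneousComponent_monomial]
      rcases eq_or_ne (d + 1) s.degree with hc | hc
      · rw [if_pos hc, if_pos (by omega), pderiv_monomial]
      · rw [if_neg hc, if_neg (by omega), map_zero]

open MvPolynomial in
lemma my_sum_hc {r : ℕ} (q : MvPolynomial (Fin 3) ℝ) (h : q.totalDegree ≤ r) :
    ∑ d ∈ Finset.range (r + 1), homogeneousComponent d q = q := by
  conv_rhs => rw [← sum_homogeneousComponent q]
  refine (Finset.sum_subset (f := fun d => homogeneousComponent d q)
    (Finset.range_subset_range.2 (Nat.succ_le_succ h)) ?_).symm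
  intro d _ hd
  have hlt : q.totalDegree < d := by simp only [Finset.mem_range, not_lt] at hd; omega
  exact homogeneousComponent_eq_zero d q hlt

set_option maxHeartbeats 2000000 in
/-- polynomial Poincaré lemma for the gradient. -/
theorem stmt_6 (r : ℕ) (v : (Fin 3 → ℝ) → (Fin 3 → ℝ)) (hv : IsVecPolyDeg (r : ℤ) v)
    (hcurl : ∀ x, pcurl v x = 0) :
    ∃ p : (Fin 3 → ℝ) → ℝ, IsPolyDeg ((r : ℤ) + 1) p ∧ ∀ x, v x = pgrad p x := by
  classical
  choose q hq using hv
  have hdeg : ∀ i, (q i).totalDegree ≤ r := by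
    intro i
    rcases (hq i).1 with h | h
    · simp [h]
    · exact_mod_cast h
  have heval : ∀ i x, MvPolynomial.eval x (q i) = v x i := fun i => (hq i).2
  have hfun : ∀ i : Fin 3, (fun y => v y i) = fun y => MvPolynomial.eval y (q i) :=
    fun i => funext fun y => (heval i y).symm
  have key : ∀ (x : Fin 3 → ℝ) (i j : Fin 3),
      fderiv ℝ (fun y => v y i) x (Pi.single j 1) =
        MvPolynomial.eval x (MvPolynomial.pderiv j (q i)) := by
    intro x i j; rw [hfun i]; exact my_fderiv_eval _ _ _
  have hcurl' : ∀ i j : Fin 3,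
      MvPolynomial.pderiv j (q i) = MvPolynomial.pderiv i (q j) := by
    have p21 : MvPolynomial.pderiv 1 (q 2) = MvPolynomial.pderiv 2 (q 1) := by
      apply MvPolynomial.funext; intro x
      have h := congrFun (hcurl x) 0
      simp only [pcurl, Matrix.cons_val_zero, Pi.zero_apply] at h
      rw [key x 2 1, key x 1 2] at h
      linarith
    have p02 : MvPolynomial.pderiv 2 (q 0) = MvPolynomial.pderiv 0 (q 2) := by
      apply MvPolynomial.funext; intro x
      have h := congrFun (hcurl x) 1
      simp only [pcurl, Matrix.cons_val_one, Matrix.head_cons, Matrix.cons_val_zero, Pi.zero_apply] at h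
      rw [key x 0 2, key x 2 0] at h
      linarith
    have p10 : MvPolynomial.pderiv 0 (q 1) = MvPolynomial.pderiv 1 (q 0) := by
      apply MvPolynomial.funext; intro x
      have h := congrFun (hcurl x) 2
      simp only [pcurl, Matrix.cons_val_two, Matrix.tail_cons, Matrix.head_cons,
        Pi.zero_apply] at h
      rw [key x 1 0, key x 0 1] at h
      linarith
    intro i j
    fin_cases i <;> fin_cases j <;>
      first
        | rfl
        | exact p21 | exact p21.symm | exact p02 | exact p02.symm
        | exact p10 | exact p10.symm
  set P : MvPolynomial (Fin 3) ℝ :=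
    ∑ d ∈ Finset.range (r + 1), ((d : ℝ) + 1)⁻¹ •
      ∑ i : Fin 3, MvPolynomial.X i *
        MvPolynomial.homogeneousComponent d (q i) with hP
  have hPd : ∀ j : Fin 3, MvPolynomial.pderiv j P = q j := by
    intro j
    rw [hP, map_sum]
    have hterm : ∀ d ∈ Finset.range (r + 1),
        MvPolynomial.pderiv j (((d : ℝ) + 1)⁻¹ •
          ∑ i : Fin 3, MvPolynomial.X i *
            MvPolynomial.homogeneousComponent d (q i)) =
          MvPolynomial.homogeneousComponent d (q j) := by
      intro d _
      have hmain : MvPolynomial.pderiv j (∑ i : Fin 3, MvPolynomial.X i *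
          MvPolynomial.homogeneousComponent d (q i)) =
            ((d : ℝ) + 1) • MvPolynomial.homogeneousComponent d (q j) := by
        rw [map_sum]
        rw [Finset.sum_congr rfl fun i _ =>
          (MvPolynomial.pderiv_mul (i := j)
            (f := MvPolynomial.X i)
            (g := MvPolynomial.homogeneousComponent d (q i)))]
        rw [Finset.sum_add_distrib]
        have h1 : ∑ i : Fin 3, MvPolynomial.pderiv j (MvPolynomial.X i) *
            MvPolynomial.homogeneousComponent d (q i) =
              MvPolynomial.homogeneousComponent d (q j) := by
          rw [Finset.sum_eq_single j]
          · simp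
          · intro i _ hij
            rw [MvPolynomial.pderiv_X_of_ne hij, zero_mul]
          · intro hj; exact absurd (Finset.mem_univ j) hj
        have h2 : ∑ i : Fin 3, MvPolynomial.X i *
            MvPolynomial.pderiv j (MvPolynomial.homogeneousComponent d (q i)) =
              (d : ℝ) • MvPolynomial.homogeneousComponent d (q j) := by
          cases d with
          | zero =>
            simp [MvPolynomial.homogeneousComponent_zero]
          | succ e =>
            have hswap : ∀ i : Fin 3,
                MvPolynomial.pderiv j
                  (MvPolynomial.homogeneousComponent (e + 1) (q i)) =
                MvPolynomial.pderiv i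
                  (MvPolynomial.homogeneousComponent (e + 1) (q j)) := fun i => by
              rw [my_pderiv_homogeneousComponent, hcurl' i j,
                ← my_pderiv_homogeneousComponent]
            rw [Finset.sum_congr rfl fun i _ => by rw [hswap i]]
            rw [my_euler (e + 1) _
              (MvPolynomial.homogeneousComponent_isHomogeneous _ _)]
        rw [h1, h2, add_comm, ← one_smul ℝ (MvPolynomial.homogeneousComponent d (q j)),
          smul_smul, ← add_smul]
        norm_num
      rw [Derivation.map_smul, hmain, smul_smul, inv_mul_cancel₀ (by positivity), one_smul]
    rw [Finset.sum_congr rfl hterm, my_sum_hc (q j) (hdeg j)]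
  have hPdeg : P.totalDegree ≤ r + 1 := by
    rw [hP]
    refine (MvPolynomial.totalDegree_finset_sum _ _).trans (Finset.sup_le fun d hd => ?_)
    refine (MvPolynomial.totalDegree_smul_le _ _).trans ?_
    refine (MvPolynomial.totalDegree_finset_sum _ _).trans (Finset.sup_le fun i _ => ?_)
    refine (MvPolynomial.totalDegree_mul _ _).trans ?_
    have h1 : (MvPolynomial.X i : MvPolynomial (Fin 3) ℝ).totalDegree = 1 :=
      MvPolynomial.totalDegree_X i
    have h2 : (MvPolynomial.homogeneousComponent d (q i)).totalDegree ≤ d :=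
      (MvPolynomial.homogeneousComponent_isHomogeneous d (q i)).totalDegree_le
    simp only [Finset.mem_range] at hd
    omega
  refine ⟨fun x => MvPolynomial.eval x P, ⟨P, Or.inr ?_, fun x => rfl⟩, ?_⟩
  · exact_mod_cast hPdeg
  · intro x
    funext i
    show v x i = fderiv ℝ (fun y => MvPolynomial.eval y P) x (Pi.single i 1)
    rw [my_fderiv_eval P x i, hPd i, heval i x]
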